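/- arXiv:2105.09716 — 2 statements merged into one kernel-verified Lean document; each statement's English description precedes it below -/
import Mathlib

section
/- Error propagation bound for inexact augmented Lagrangian update: Let x_k : S × A → ℝ be given, let (V̂, ĥ) be the exact minimizer of L_μ(V,h,x_k) over V and h ≥ 0, and set x̂(s,a) = Z_μ(V̂,ĥ,x_k,s,a). Suppose (V₊,h₊) is an approximate minimizer with ε_L := L_μ(V₊,h₊,x_k) − inf_{h≥0,V} L_μ(V,h,x_k), and x₊ satisfies ε_x := Σ_{s,a} w(s,a)(x₊(s,a) − Z_μ(V₊,h₊,x_k,s,a))². Then Σ_{s,a} w(s,a)(x₊(s,a) − x̂(s,a))² ≤ 2 ε_x + 4 μ ε_L. -/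
/-- The Z-function `Z_μ(V,h,x,s,a)`. -/
def Zmu {S A : Type*} [Fintype S]
    (P : S → A → S → ℝ) (r : S → A → ℝ) (γ μ : ℝ)
    (V : S → ℝ) (h x : S → A → ℝ) (s : S) (a : A) : ℝ :=
  x s a + μ * (h s a + r s a + γ * (∑ s', P s a s' * V s') - V s)

/-- The weighted augmented Lagrangian `L_μ(V,h,x)`. -/
noncomputable def Lmu {S A : Type*} [Fintype S] [Fintype A]
    (P : S → A → S → ℝ) (r : S → A → ℝ) (ρ₀ : S → ℝ) (γ μ : ℝ)
    (w : S → A → ℝ) (V : S → ℝ) (h x : S → A → ℝ) : ℝ :=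
  (∑ s, ρ₀ s * V s) +
    (1 / (2 * μ)) * ∑ s, ∑ a, w s a * (Zmu P r γ μ V h x s a) ^ 2

lemma Zmu_combo {S A : Type*} [Fintype S]
    (P : S → A → S → ℝ) (r : S → A → ℝ) (γ μ : ℝ)
    (V₁ V₂ : S → ℝ) (h₁ h₂ x : S → A → ℝ) (t : ℝ) (s : S) (a : A) :
    Zmu P r γ μ (fun s => V₁ s + t * (V₂ s - V₁ s))
      (fun s a => h₁ s a + t * (h₂ s a - h₁ s a)) x s a
    = Zmu P r γ μ V₁ h₁ x s a
      + t * (Zmu P r γ μ V₂ h₂ x s a - Zmu P r γ μ V₁ h₁ x s a) := by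
  have hs : ∑ s', P s a s' * (V₁ s' + t * (V₂ s' - V₁ s'))
      = (∑ s', P s a s' * V₁ s')
        + t * ((∑ s', P s a s' * V₂ s') - ∑ s', P s a s' * V₁ s') := by
    rw [← Finset.sum_sub_distrib, Finset.mul_sum, ← Finset.sum_add_distrib]
    exact Finset.sum_congr rfl fun s' _ => by ring
  simp only [Zmu, hs]
  ring

lemma Lmu_combo {S A : Type*} [Fintype S] [Fintype A]
    (P : S → A → S → ℝ) (r : S → A → ℝ) (ρ₀ : S → ℝ) (γ μ : ℝ)
    (w : S → A → ℝ) (V₁ V₂ : S → ℝ) (h₁ h₂ x : S → A → ℝ) (t : ℝ) :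
    Lmu P r ρ₀ γ μ w (fun s => V₁ s + t * (V₂ s - V₁ s))
      (fun s a => h₁ s a + t * (h₂ s a - h₁ s a)) x
    = Lmu P r ρ₀ γ μ w V₁ h₁ x
      + t * (Lmu P r ρ₀ γ μ w V₂ h₂ x - Lmu P r ρ₀ γ μ w V₁ h₁ x)
      - t * (1 - t) * ((1 / (2 * μ)) * ∑ s, ∑ a,
          w s a * (Zmu P r γ μ V₂ h₂ x s a - Zmu P r γ μ V₁ h₁ x s a) ^ 2) := by
  simp only [Lmu, Zmu_combo]
  have h1 : ∑ s, ρ₀ s * (V₁ s + t * (V₂ s - V₁ s))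
      = (∑ s, ρ₀ s * V₁ s) + t * ((∑ s, ρ₀ s * V₂ s) - ∑ s, ρ₀ s * V₁ s) := by
    rw [← Finset.sum_sub_distrib, Finset.mul_sum, ← Finset.sum_add_distrib]
    exact Finset.sum_congr rfl fun s _ => by ring
  have h2 : ∑ s, ∑ a, w s a * (Zmu P r γ μ V₁ h₁ x s a
        + t * (Zmu P r γ μ V₂ h₂ x s a - Zmu P r γ μ V₁ h₁ x s a)) ^ 2
      = (∑ s, ∑ a, w s a * (Zmu P r γ μ V₁ h₁ x s a) ^ 2)
        + t * ((∑ s, ∑ a, w s a * (Zmu P r γ μ V₂ h₂ x s a) ^ 2)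
            - ∑ s, ∑ a, w s a * (Zmu P r γ μ V₁ h₁ x s a) ^ 2)
        - t * (1 - t) * ∑ s, ∑ a,
            w s a * (Zmu P r γ μ V₂ h₂ x s a - Zmu P r γ μ V₁ h₁ x s a) ^ 2 := by
    simp only [Finset.mul_sum, ← Finset.sum_sub_distrib, ← Finset.sum_add_distrib]
    exact Finset.sum_congr rfl fun s _ => Finset.sum_congr rfl fun a _ => by ring
  rw [h1, h2]
  ring

/-- Error propagation for an inexact augmented Lagrangian update:
`Σ w (x₊ - x̂)² ≤ 2 ε_x + 4 μ ε_L`. -/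
theorem inexact_alm_error_bound
    {S A : Type*} [Fintype S] [Fintype A]
    (P : S → A → S → ℝ) (hP : ∀ s a, ∑ s', P s a s' = 1)
    (r : S → A → ℝ)
    (ρ₀ : S → ℝ) (hρ₀ : ∀ s, 0 ≤ ρ₀ s) (hρsum : ∑ s, ρ₀ s = 1)
    (γ : ℝ) (hγ : 0 < γ) (hγ1 : γ < 1)
    (w : S → A → ℝ) (hw : ∀ s a, 0 < w s a) (hwsum : ∑ s, ∑ a, w s a = 1)
    (μ : ℝ) (hμ : 0 < μ)
    (xk : S → A → ℝ)
    -- exact minimizer (V̂, ĥ) of L_μ(·,·,x_k) over V and h ≥ 0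
    (Vhat : S → ℝ) (hhat : S → A → ℝ)
    (hhat_nonneg : ∀ s a, 0 ≤ hhat s a)
    (hhat_min : ∀ (V : S → ℝ) (h : S → A → ℝ), (∀ s a, 0 ≤ h s a) →
      Lmu P r ρ₀ γ μ w Vhat hhat xk ≤ Lmu P r ρ₀ γ μ w V h xk)
    -- approximate minimizer (V₊, h₊) and approximate multiplier x₊
    (Vp : S → ℝ) (hp : S → A → ℝ) (hp_nonneg : ∀ s a, 0 ≤ hp s a)
    (xp : S → A → ℝ)
    (εL εx : ℝ)
    (hεL : εL = Lmu P r ρ₀ γ μ w Vp hp xk - Lmu P r ρ₀ γ μ w Vhat hhat xk)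
    (hεx : εx = ∑ s, ∑ a,
      w s a * (xp s a - Zmu P r γ μ Vp hp xk s a) ^ 2) :
    ∑ s, ∑ a, w s a * (xp s a - Zmu P r γ μ Vhat hhat xk s a) ^ 2
      ≤ 2 * εx + 4 * μ * εL := by
  set D : ℝ := ∑ s, ∑ a,
      w s a * (Zmu P r γ μ Vp hp xk s a - Zmu P r γ μ Vhat hhat xk s a) ^ 2 with hD
  have hD0 : 0 ≤ D := Finset.sum_nonneg fun s _ => Finset.sum_nonneg fun a _ =>
    mul_nonneg (hw s a).le (sq_nonneg _)
  have hεL0 : 0 ≤ εL := by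
    rw [hεL]; linarith [hhat_min Vp hp hp_nonneg]
  have hc : (0:ℝ) < 1 / (2 * μ) := by positivity
  -- key strong convexity step: (1/(2μ)) * D ≤ εL
  have key : (1 / (2 * μ)) * D ≤ εL := by
    have step : ∀ t : ℝ, 0 < t → t ≤ 1 → (1 - t) * ((1 / (2 * μ)) * D) ≤ εL := by
      intro t ht0 ht1
      have hmin := hhat_min (fun s => Vhat s + t * (Vp s - Vhat s))
        (fun s a => hhat s a + t * (hp s a - hhat s a))
        (fun s a => by nlinarith [hhat_nonneg s a, hp_nonneg s a])
      rw [Lmu_combo] at hmin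
      rw [hεL]
      have := hmin
      nlinarith [this]
    rcases le_or_gt ((1 / (2 * μ)) * D) 0 with h | h
    · linarith
    · by_contra hcon
      push_neg at hcon
      have hq : 0 < ((1 / (2 * μ)) * D - εL) / (2 * ((1 / (2 * μ)) * D)) :=
        div_pos (by linarith) (by linarith)
      set t := min 1 (((1 / (2 * μ)) * D - εL) / (2 * ((1 / (2 * μ)) * D))) with htdef
      have ht0 : 0 < t := lt_min one_pos hq
      have ht1 : t ≤ 1 := min_le_left _ _
      have := step t ht0 ht1
      have h2 : t * ((1 / (2 * μ)) * D) ≤ ((1 / (2 * μ)) * D - εL) / 2 := by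
        calc t * ((1 / (2 * μ)) * D)
            ≤ (((1 / (2 * μ)) * D - εL) / (2 * ((1 / (2 * μ)) * D))) * ((1 / (2 * μ)) * D) :=
              mul_le_mul_of_nonneg_right (min_le_right _ _) h.le
          _ = ((1 / (2 * μ)) * D - εL) / 2 := by
              rw [div_mul_eq_mul_div, mul_comm 2 ((1 / (2 * μ)) * D),
                ← div_div, mul_div_assoc, div_self h.ne', mul_one]
      nlinarith
  have hDle : D ≤ 2 * μ * εL := by
    rw [one_div, ← div_eq_inv_mul] at key
    have := (div_le_iff₀ (by positivity : (0:ℝ) < 2 * μ)).mp key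
    linarith
  -- pointwise (a+b)² ≤ 2a² + 2b²
  have hsum : ∑ s, ∑ a, w s a * (xp s a - Zmu P r γ μ Vhat hhat xk s a) ^ 2
      ≤ 2 * εx + 2 * D := by
    rw [hεx, hD, Finset.mul_sum, Finset.mul_sum, ← Finset.sum_add_distrib]
    refine Finset.sum_le_sum fun s _ => ?_
    rw [Finset.mul_sum, Finset.mul_sum, ← Finset.sum_add_distrib]
    refine Finset.sum_le_sum fun a _ => ?_
    nlinarith [sq_nonneg ((xp s a - Zmu P r γ μ Vp hp xk s a)
        - (Zmu P r γ μ Vp hp xk s a - Zmu P r γ μ Vhat hhat xk s a)), (hw s a).le]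
  linarith
end

section
/- Key intermediate inequality: with (V̂,ĥ) an exact minimizer of L_μ(·,·,x_k) over V and h ≥ 0, x̂ = Z_μ(V̂,ĥ,x_k,·), (V₊,h₊) any point with h₊ ≥ 0, and x̄ = Z_μ(V₊,h₊,x_k,·), the suboptimality ε_L = L_μ(V₊,h₊,x_k) − L_μ(V̂,ĥ,x_k) satisfies ε_L ≥ (1/(2μ)) Σ_{s,a} w(s,a)(x̂(s,a) − x̄(s,a))². -/
/-- Key intermediate inequality: the suboptimality `ε_L` dominates the
weighted squared distance between `x̂ = Z_μ(V̂,ĥ,x_k,·)` and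
`x̄ = Z_μ(V₊,h₊,x_k,·)`, up to the factor `1/(2μ)`. -/
theorem alm_suboptimality_lower_bound
    {S A : Type*} [Fintype S] [Fintype A]
    (P : S → A → S → ℝ) (hP : ∀ s a, ∑ s', P s a s' = 1)
    (r : S → A → ℝ)
    (ρ₀ : S → ℝ) (hρ₀ : ∀ s, 0 ≤ ρ₀ s) (hρsum : ∑ s, ρ₀ s = 1)
    (γ : ℝ) (hγ : 0 < γ) (hγ1 : γ < 1)
    (w : S → A → ℝ) (hw : ∀ s a, 0 < w s a) (hwsum : ∑ s, ∑ a, w s a = 1)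
    (μ : ℝ) (hμ : 0 < μ)
    (xk : S → A → ℝ)
    (Vhat : S → ℝ) (hhat : S → A → ℝ)
    (hhat_nonneg : ∀ s a, 0 ≤ hhat s a)
    (hhat_min : ∀ (V : S → ℝ) (h : S → A → ℝ), (∀ s a, 0 ≤ h s a) →
      Lmu P r ρ₀ γ μ w Vhat hhat xk ≤ Lmu P r ρ₀ γ μ w V h xk)
    (Vp : S → ℝ) (hp : S → A → ℝ) (hp_nonneg : ∀ s a, 0 ≤ hp s a) :
    Lmu P r ρ₀ γ μ w Vp hp xk - Lmu P r ρ₀ γ μ w Vhat hhat xk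
      ≥ (1 / (2 * μ)) * ∑ s, ∑ a,
          w s a * (Zmu P r γ μ Vhat hhat xk s a
                    - Zmu P r γ μ Vp hp xk s a) ^ 2 := by
  set A1 := fun (s : S) (a : A) => Zmu P r γ μ Vhat hhat xk s a with hA1
  set B1 := fun (s : S) (a : A) => Zmu P r γ μ Vp hp xk s a with hB1
  set c := (1 / (2 * μ)) * ∑ s, ∑ a, w s a * (A1 s a - B1 s a) ^ 2 with hc
  set D := Lmu P r ρ₀ γ μ w Vp hp xk - Lmu P r ρ₀ γ μ w Vhat hhat xk with hD
  have key : ∀ l : ℝ, 0 < l → l < 1 → (1 - l) * c ≤ D := by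
    intro l hl hl1
    have hZ : ∀ s a, Zmu P r γ μ (fun s => (1-l) * Vhat s + l * Vp s)
        (fun s a => (1-l) * hhat s a + l * hp s a) xk s a
        = (1-l) * A1 s a + l * B1 s a := by
      intro s a
      simp only [Zmu, hA1, hB1]
      have hsum : ∑ s', P s a s' * ((1-l) * Vhat s' + l * Vp s')
          = (1-l) * ∑ s', P s a s' * Vhat s' + l * ∑ s', P s a s' * Vp s' := by
        rw [Finset.mul_sum, Finset.mul_sum, ← Finset.sum_add_distrib]
        exact Finset.sum_congr rfl fun s' _ => by ring
      rw [hsum]; ring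
    have hmin := hhat_min (fun s => (1-l) * Vhat s + l * Vp s)
      (fun s a => (1-l) * hhat s a + l * hp s a)
      (fun s a => by nlinarith [hhat_nonneg s a, hp_nonneg s a])
    have e1 : ∑ s, ρ₀ s * ((1-l) * Vhat s + l * Vp s)
        = (1-l) * ∑ s, ρ₀ s * Vhat s + l * ∑ s, ρ₀ s * Vp s := by
      rw [Finset.mul_sum, Finset.mul_sum, ← Finset.sum_add_distrib]
      exact Finset.sum_congr rfl fun s _ => by ring
    have e2 : ∑ s, ∑ a, w s a * ((1-l) * A1 s a + l * B1 s a) ^ 2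
        = (1-l) * (∑ s, ∑ a, w s a * A1 s a ^ 2)
          + l * (∑ s, ∑ a, w s a * B1 s a ^ 2)
          - l * (1-l) * ∑ s, ∑ a, w s a * (A1 s a - B1 s a) ^ 2 := by
      rw [Finset.mul_sum, Finset.mul_sum, Finset.mul_sum, ← Finset.sum_add_distrib,
        ← Finset.sum_sub_distrib]
      refine Finset.sum_congr rfl fun s _ => ?_
      rw [Finset.mul_sum, Finset.mul_sum, Finset.mul_sum, ← Finset.sum_add_distrib,
        ← Finset.sum_sub_distrib]
      exact Finset.sum_congr rfl fun a _ => by ring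
    have hLcc : Lmu P r ρ₀ γ μ w (fun s => (1-l) * Vhat s + l * Vp s)
        (fun s a => (1-l) * hhat s a + l * hp s a) xk
        = (1-l) * Lmu P r ρ₀ γ μ w Vhat hhat xk
          + l * Lmu P r ρ₀ γ μ w Vp hp xk - l * (1-l) * c := by
      simp only [Lmu, hZ]
      rw [e1, e2, hc]
      simp only [hA1, hB1]
      ring
    rw [hLcc] at hmin
    have hl' : 0 < l := hl
    have : l * ((1-l) * c) ≤ l * D := by rw [hD]; nlinarith [hmin]
    exact le_of_mul_le_mul_left this hl'
  have hcD : c ≤ D := by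
    have ht : Filter.Tendsto (fun l : ℝ => (1 - l) * c)
        (nhdsWithin 0 (Set.Ioi 0)) (nhds c) := by
      have h0 : Filter.Tendsto (fun l : ℝ => (1 - l) * c) (nhds 0) (nhds ((1 - 0) * c)) := by
        exact (Filter.Tendsto.const_sub 1 Filter.tendsto_id).mul_const c
      simpa using h0.mono_left nhdsWithin_le_nhds
    refine le_of_tendsto ht ?_
    filter_upwards [Ioo_mem_nhdsGT (by norm_num : (0:ℝ) < 1)] with l hl
    exact key l hl.1 hl.2
  exact hcD
end
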